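/- arXiv:1309.3307 — 2 statements merged into one kernel-verified Lean document; each statement's English description precedes it below -/
import Mathlib

section
/- Fix a block length N ≥ 1, a crossover probability p ∈ (0,1), a number of codewords M ≥ 1, and a transmitted codeword x₁ ∈ {0,1}^N. Let Z = (Z_1,…,Z_N) have independent Bernoulli(p) coordinates, let y = x₁ ⊕ Z (coordinatewise XOR), and let X_2,…,X_M be independent random vectors, each uniformly distributed on {0,1}^N and independent of Z. Declare a decoding failure if there exists j ∈ {2,…,M} with d_H(X_j, y) ≤ d_H(x₁, y) (so ties count as failures). Then the probability of decoding failure equals ∑_{e=0}^{N} C(N,e) p^e (1−p)^{N−e} · [1 − (1 − 2^{−N} ∑_{i=0}^{e} C(N,i))^{M−1}]. -/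
open Finset

def wt {N : ℕ} (z : Fin N → Bool) : ℕ := #{k | z k = true}

lemma wt_card (N e : ℕ) :
    #({z : Fin N → Bool | wt z = e} : Finset _) = N.choose e := by
  have h := Fintype.card_finset_len (α := Fin N) e
  rw [Fintype.card_fin] at h
  rw [← h, Fintype.card_subtype]
  apply Finset.card_nbij' (i := fun (z : Fin N → Bool) => ({k | z k = true} : Finset (Fin N)))
    (j := fun (s : Finset (Fin N)) k => k ∈ s)
  · intro z hz
    simp only [mem_coe, mem_filter, mem_univ, true_and] at hz ⊢; simp only [wt] at hz ⊢
    exact hz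
  · intro s hs
    simp only [mem_coe, mem_filter, mem_univ, true_and] at hs ⊢; simp only [wt] at hs ⊢
    rw [show ({k | decide (k ∈ s) = true} : Finset (Fin N)) = s by ext k; simp]
    exact hs
  · intro z _; funext k; simp
  · intro s _; ext k; simp

lemma dist_eq_wt {N : ℕ} (v y : Fin N → Bool) :
    hammingDist v y = wt (fun k => xor (v k) (y k)) := by
  unfold hammingDist wt
  congr 1
  ext k
  cases hv : v k <;> cases hy : y k <;> simp [hv, hy]

lemma sphere_card {N : ℕ} (y : Fin N → Bool) (i : ℕ) :
    #({v : Fin N → Bool | hammingDist v y = i} : Finset _) = N.choose i := by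
  rw [← wt_card N i]
  apply Finset.card_nbij' (i := fun (v : Fin N → Bool) k => xor (v k) (y k))
    (j := fun (z : Fin N → Bool) k => xor (z k) (y k))
  · intro v hv
    simp only [mem_coe, mem_filter, mem_univ, true_and] at hv ⊢
    rw [← dist_eq_wt]; exact hv
  · intro z hz
    simp only [mem_coe, mem_filter, mem_univ, true_and] at hz ⊢
    rw [dist_eq_wt]
    convert hz using 2
    funext k; simp [Bool.xor_assoc]
  · intro v _; funext k; simp [Bool.xor_assoc]
  · intro z _; funext k; simp [Bool.xor_assoc]

lemma ball_card {N : ℕ} (y : Fin N → Bool) (e : ℕ) :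
    #({v : Fin N → Bool | hammingDist v y ≤ e} : Finset _)
      = ∑ i ∈ range (e + 1), N.choose i := by
  have : ({v : Fin N → Bool | hammingDist v y ≤ e} : Finset _)
      = (range (e + 1)).biUnion (fun i => {v : Fin N → Bool | hammingDist v y = i}) := by
    ext v
    simp [Nat.lt_succ_iff]
  rw [this, Finset.card_biUnion]
  · exact Finset.sum_congr rfl fun i _ => sphere_card y i
  · intro i _ j _ hij
    simp only [Finset.disjoint_left, mem_filter, mem_univ, true_and]
    intro v hv hv2
    exact hij (hv ▸ hv2 ▸ rfl)

lemma pi_count {α : Type*} [Fintype α] [DecidableEq α] (m : ℕ) (P : α → Prop)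
    [DecidablePred P] :
    #({xs : Fin m → α | ∀ j, ¬ P (xs j)} : Finset _)
      = (#({a : α | ¬ P a} : Finset α)) ^ m := by
  have : ({xs : Fin m → α | ∀ j, ¬ P (xs j)} : Finset _)
      = Fintype.piFinset (fun _ : Fin m => ({a : α | ¬ P a} : Finset α)) := by
    ext xs
    simp [Fintype.mem_piFinset]
  rw [this, Fintype.card_piFinset]
  simp


/-- failure probability of ML (minimum-distance) decoding of a
random code with `M` codewords over `BSC(p)`, ties counted as failures.
The sample space consists of the error pattern `z` (independent `Bernoulli p`
coordinates) together with the `M - 1` other codewords `xs` (independent,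
uniform on `{0,1}^N`); the received word is `y = x₁ ⊕ z`. -/
theorem stmt_0 (N M : ℕ) (hN : 1 ≤ N) (hM : 1 ≤ M) (p : ℝ) (hp0 : 0 < p) (hp1 : p < 1)
    (x₁ : Fin N → Bool) :
    (∑ z : Fin N → Bool, ∑ xs : Fin (M - 1) → Fin N → Bool,
      ((∏ k : Fin N, if z k then p else 1 - p) * ((2 ^ N : ℝ)⁻¹) ^ (M - 1)) *
        (if ∃ j : Fin (M - 1),
            hammingDist (xs j) (fun k => xor (x₁ k) (z k)) ≤
              hammingDist x₁ (fun k => xor (x₁ k) (z k)) then 1 else 0))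
    = ∑ e ∈ Finset.range (N + 1),
        (N.choose e : ℝ) * p ^ e * (1 - p) ^ (N - e) *
          (1 - (1 - (2 ^ N : ℝ)⁻¹ *
            ∑ i ∈ Finset.range (e + 1), (N.choose i : ℝ)) ^ (M - 1)) := by
  set m := M - 1 with hm
  set B : ℕ → ℝ := fun e => ∑ i ∈ Finset.range (e + 1), (N.choose i : ℝ) with hB
  have ht : (2 ^ N : ℝ) ≠ 0 := by positivity
  -- Step 1: evaluate the inner sum for each z
  have step1 : ∀ z : Fin N → Bool,
      (∑ xs : Fin m → Fin N → Bool,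
        ((∏ k : Fin N, if z k then p else 1 - p) * ((2 ^ N : ℝ)⁻¹) ^ m) *
          (if ∃ j : Fin m,
              hammingDist (xs j) (fun k => xor (x₁ k) (z k)) ≤
                hammingDist x₁ (fun k => xor (x₁ k) (z k)) then 1 else 0))
      = (p ^ (wt z) * (1 - p) ^ (N - wt z)) *
          (1 - (1 - (2 ^ N : ℝ)⁻¹ * B (wt z)) ^ m) := by
    intro z
    set y : Fin N → Bool := fun k => xor (x₁ k) (z k) with hy
    -- distance from x₁ to y is wt z
    have hd : hammingDist x₁ y = wt z := by
      unfold hammingDist wt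
      congr 1
      ext k
      simp only [hy, mem_filter]
      cases hx : x₁ k <;> cases hz : z k <;> simp [hx, hz]
    -- product equals p^wt (1-p)^(N-wt)
    have hprod : (∏ k : Fin N, if z k then p else 1 - p)
        = p ^ (wt z) * (1 - p) ^ (N - wt z) := by
      rw [Finset.prod_ite, Finset.prod_const, Finset.prod_const]
      have h2 : #({k : Fin N | ¬ z k = true} : Finset _) = N - wt z := by
        rw [Finset.filter_not, Finset.card_sdiff_of_subset (Finset.filter_subset _ _)]
        simp [wt]
      rw [h2]
      rfl
    -- counting
    have hcompl : (#({v : Fin N → Bool | ¬ hammingDist v y ≤ wt z} : Finset _) : ℝ)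
        = 2 ^ N - B (wt z) := by
      have h1 := Finset.card_filter_add_card_filter_not
        (s := (Finset.univ : Finset (Fin N → Bool)))
        (p := fun v => hammingDist v y ≤ wt z)
      rw [ball_card y (wt z)] at h1
      have h2 : (Finset.univ : Finset (Fin N → Bool)).card = 2 ^ N := by
        simp [Fintype.card_fun]
      rw [h2] at h1
      have := congrArg (fun n : ℕ => (n : ℝ)) h1
      push_cast at this ⊢
      rw [hB]
      push_cast
      linarith
    have hcount : (∑ xs : Fin m → Fin N → Bool,
        (if ∃ j : Fin m, hammingDist (xs j) y ≤ hammingDist x₁ y then (1:ℝ) else 0))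
        = (2 ^ N : ℝ) ^ m - (2 ^ N - B (wt z)) ^ m := by
      rw [Finset.sum_boole]
      have hsplit := Finset.card_filter_add_card_filter_not
        (s := (Finset.univ : Finset (Fin m → Fin N → Bool)))
        (p := fun xs => ∃ j : Fin m, hammingDist (xs j) y ≤ hammingDist x₁ y)
      have hneg : #({xs : Fin m → Fin N → Bool |
          ¬ ∃ j : Fin m, hammingDist (xs j) y ≤ hammingDist x₁ y} : Finset _)
          = (#({v : Fin N → Bool | ¬ hammingDist v y ≤ wt z} : Finset _)) ^ m := by
        rw [← pi_count m (fun v => hammingDist v y ≤ wt z)]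
        congr 1
        ext xs
        simp [hd]
      have huniv : (Finset.univ : Finset (Fin m → Fin N → Bool)).card = (2 ^ N) ^ m := by
        simp [Fintype.card_fun]
      rw [hneg, huniv] at hsplit
      have := congrArg (fun n : ℕ => (n : ℝ)) hsplit
      push_cast at this
      rw [hcompl] at this
      push_cast
      linarith
    rw [← Finset.mul_sum, hcount, hprod]
    rw [mul_assoc]
    congr 1
    have key : (1 - (2 ^ N : ℝ)⁻¹ * B (wt z)) = (2 ^ N - B (wt z)) * (2 ^ N : ℝ)⁻¹ := by
      field_simp
    rw [key, mul_pow, mul_sub, ← mul_pow, inv_mul_cancel₀ ht, one_pow]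
    ring
  rw [Finset.sum_congr rfl fun z _ => step1 z]
  -- Step 2: group by weight
  have hmap : ∀ z : Fin N → Bool, z ∈ (Finset.univ : Finset (Fin N → Bool)) →
      wt z ∈ Finset.range (N + 1) := by
    intro z _
    rw [Finset.mem_range, Nat.lt_succ_iff]
    calc wt z ≤ (Finset.univ : Finset (Fin N)).card := Finset.card_filter_le _ _
    _ = N := by simp
  rw [← Finset.sum_fiberwise_of_maps_to hmap
    (fun z => (p ^ (wt z) * (1 - p) ^ (N - wt z)) * (1 - (1 - (2 ^ N : ℝ)⁻¹ * B (wt z)) ^ m))]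
  apply Finset.sum_congr rfl
  intro e he
  have : ∀ z ∈ ({z : Fin N → Bool | wt z = e} : Finset _),
      (p ^ (wt z) * (1 - p) ^ (N - wt z)) * (1 - (1 - (2 ^ N : ℝ)⁻¹ * B (wt z)) ^ m)
      = (p ^ e * (1 - p) ^ (N - e)) * (1 - (1 - (2 ^ N : ℝ)⁻¹ * B e) ^ m) := by
    intro z hz
    simp only [mem_filter] at hz
    rw [hz.2]
  rw [Finset.sum_congr rfl this, Finset.sum_const, wt_card N e, nsmul_eq_mul]
  ring
end

section
/- Fix N ≥ 1, M ≥ 2, an integer safety margin ν ≥ 0, a transmitted codeword X_1 = x₁ ∈ {0,1}^N and a received vector y ∈ {0,1}^N with d_H(x₁, y) = e, where e ≥ ν + 1. Let X_2,…,X_M be independent, each uniform on {0,1}^N. Let B = min_{1 ≤ j ≤ M} d_H(X_j, y), and say an undetected failure occurs if there is an index ĵ with d_H(X_{ĵ}, y) = B, X_{ĵ} ≠ x₁, and every index k with X_k ≠ X_{ĵ} satisfies d_H(X_k, y) > B + ν (so the decoder outputs the wrong codeword X_{ĵ}). Then an undetected failure implies that some j ∈ {2,…,M} satisfies d_H(X_j,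 y) ≤ e − ν − 1, and consequently the probability of undetected failure is at most 1 − (1 − 2^{−N} ∑_{i=0}^{e−ν−1} C(N,i))^{M−1}. -/
open scoped Classical

/-- The full family of codewords: index `none` is the transmitted codeword
`x₁`, index `some j` is the `j`-th of the `M - 1` random codewords. -/
def Xfam {N K : ℕ} (x₁ : Fin N → Bool) (xs : Fin K → Fin N → Bool) :
    Option (Fin K) → Fin N → Bool := fun i => i.elim x₁ xs

/-- Undetected failure of the margin-`ν` decoder: some codeword `X_jhat` attains
the minimum distance `B` to `y`, differs from the transmitted codeword `x₁`,
and every codeword different from `X_jhat` is at distance `> B + ν`, so the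
decoder outputs the wrong codeword `X_jhat`. -/
def Undet {N K : ℕ} (x₁ y : Fin N → Bool) (ν : ℕ)
    (xs : Fin K → Fin N → Bool) : Prop :=
  ∃ jhat : Option (Fin K),
    (∀ k : Option (Fin K),
      hammingDist (Xfam x₁ xs jhat) y ≤ hammingDist (Xfam x₁ xs k) y) ∧
    Xfam x₁ xs jhat ≠ x₁ ∧
    ∀ k : Option (Fin K), Xfam x₁ xs k ≠ Xfam x₁ xs jhat →
      hammingDist (Xfam x₁ xs jhat) y + ν < hammingDist (Xfam x₁ xs k) y

lemma card_sphere {N : ℕ} (y : Fin N → Bool) (i : ℕ) :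
    (Finset.univ.filter fun x : Fin N → Bool => hammingDist x y = i).card = N.choose i := by
  have : N.choose i = (Finset.powersetCard i (Finset.univ : Finset (Fin N))).card := by
    rw [Finset.card_powersetCard, Finset.card_univ, Fintype.card_fin]
  rw [this]
  apply Finset.card_bij' (fun x _ => Finset.univ.filter fun j => x j ≠ y j)
    (fun s _ => fun j => if j ∈ s then !(y j) else y j)
  · intro x hx
    simp only [Finset.mem_filter, Finset.mem_univ, true_and] at hx
    simp [Finset.mem_powersetCard, ← hx, hammingDist]
  · intro s hs
    simp only [Finset.mem_powersetCard] at hs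
    simp only [Finset.mem_filter, Finset.mem_univ, true_and, hammingDist]
    rw [← hs.2]
    congr 1
    ext j
    by_cases hj : j ∈ s <;> simp [hj]
  · intro x hx
    funext j
    by_cases h : x j = y j <;> simp [h]
    cases hx' : x j <;> cases hy : y j <;> simp_all
  · intro s hs
    ext j
    by_cases hj : j ∈ s <;> simp [hj]

lemma card_ball {N : ℕ} (y : Fin N → Bool) (t : ℕ) :
    (Finset.univ.filter fun x : Fin N → Bool => hammingDist x y ≤ t).card
      = ∑ i ∈ Finset.range (t+1), N.choose i := by
  have hset : (Finset.univ.filter fun x : Fin N → Bool => hammingDist x y ≤ t)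
      = (Finset.range (t+1)).biUnion
        (fun i => Finset.univ.filter fun x => hammingDist x y = i) := by
    ext x; simp [Nat.lt_succ_iff]
  rw [hset, Finset.card_biUnion]
  · exact Finset.sum_congr rfl fun i _ => card_sphere y i
  · intro a _ b _ hab
    simp only [Finset.disjoint_left, Finset.mem_filter]
    rintro x ⟨-, h1⟩ ⟨-, h2⟩
    exact hab (h1 ▸ h2 ▸ rfl)

/-- given `d_H(x₁,y) = e ≥ ν + 1`, an undetected failure of the
margin-`ν` decoder implies that some other codeword lies within distance
`e - ν - 1` of `y`; consequently the probability of undetected failure (over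
the `M - 1` independent uniform codewords) is at most
`1 - (1 - 2^{-N} ∑_{i=0}^{e-ν-1} C(N,i))^{M-1}`. -/
theorem stmt_13 (N M ν : ℕ) (hN : 1 ≤ N) (hM : 2 ≤ M) (x₁ y : Fin N → Bool)
    (e : ℕ) (he : hammingDist x₁ y = e) (heν : ν + 1 ≤ e) :
    (∀ xs : Fin (M - 1) → Fin N → Bool,
      Undet x₁ y ν xs → ∃ j : Fin (M - 1), hammingDist (xs j) y ≤ e - ν - 1)
    ∧
    (∑ xs : Fin (M - 1) → Fin N → Bool,
      ((2 ^ N : ℝ)⁻¹) ^ (M - 1) * (if Undet x₁ y ν xs then 1 else 0))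
    ≤ 1 - (1 - (2 ^ N : ℝ)⁻¹ *
        ∑ i ∈ Finset.range (e - ν - 1 + 1), (N.choose i : ℝ)) ^ (M - 1) := by
  set K := M - 1 with hK
  set t := e - ν - 1 with ht
  have part1 : ∀ xs : Fin K → Fin N → Bool,
      Undet x₁ y ν xs → ∃ j : Fin K, hammingDist (xs j) y ≤ t := by
    rintro xs ⟨jhat, hmin, hne, hfar⟩
    match jhat with
    | none => exact absurd rfl hne
    | some j =>
      refine ⟨j, ?_⟩
      have h1 : (Xfam x₁ xs none : Fin N → Bool) ≠ Xfam x₁ xs (some j) := by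
        simpa [Xfam] using fun h => hne h.symm
      have h2 := hfar none h1
      simp only [Xfam, Option.elim] at h2
      omega
  refine ⟨part1, ?_⟩
  -- counting setup
  have hcard2N : Fintype.card (Fin N → Bool) = 2 ^ N := by
    simp [Fintype.card_fun]
  set b : ℕ := (Finset.univ.filter fun x : Fin N → Bool => hammingDist x y ≤ t).card with hb
  have hbball : b = ∑ i ∈ Finset.range (t+1), N.choose i := card_ball y t
  have hble : b ≤ 2 ^ N := by
    rw [hb, ← hcard2N, ← Finset.card_univ]
    exact Finset.card_filter_le _ _
  set B : ℕ := 2 ^ N - b with hB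
  -- card of the "no codeword in the ball" event
  have hpi : (Finset.univ.filter fun xs : Fin K → Fin N → Bool =>
        ∀ j, ¬ hammingDist (xs j) y ≤ t)
      = Fintype.piFinset (fun _ : Fin K =>
          Finset.univ.filter fun x : Fin N → Bool => ¬ hammingDist x y ≤ t) := by
    ext xs; simp [Fintype.mem_piFinset]
  have hcardcompl : (Finset.univ.filter fun x : Fin N → Bool =>
      ¬ hammingDist x y ≤ t).card = B := by
    have := Finset.card_filter_add_card_filter_not
      (s := (Finset.univ : Finset (Fin N → Bool)))
      (p := fun x => hammingDist x y ≤ t)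
    rw [Finset.card_univ, hcard2N] at this
    omega
  have hcardAll : (Finset.univ.filter fun xs : Fin K → Fin N → Bool =>
      ∀ j, ¬ hammingDist (xs j) y ≤ t).card = B ^ K := by
    rw [hpi, Fintype.card_piFinset]
    simp only [hcardcompl]
    simp
  have hsplit := Finset.card_filter_add_card_filter_not
      (s := (Finset.univ : Finset (Fin K → Fin N → Bool)))
      (p := fun xs => ∃ j, hammingDist (xs j) y ≤ t)
  have hnegeq : (Finset.univ.filter fun xs : Fin K → Fin N → Bool =>
        ¬ ∃ j, hammingDist (xs j) y ≤ t)
      = Finset.univ.filter fun xs : Fin K → Fin N → Bool =>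
        ∀ j, ¬ hammingDist (xs j) y ≤ t := by
    ext xs; simp
  have hcardFun : Fintype.card (Fin K → Fin N → Bool) = (2 ^ N) ^ K := by
    simp [Fintype.card_fun]
  rw [hnegeq, hcardAll, Finset.card_univ, hcardFun] at hsplit
  have hG : (Finset.univ.filter fun xs : Fin K → Fin N → Bool =>
      ∃ j, hammingDist (xs j) y ≤ t).card = (2 ^ N) ^ K - B ^ K := Nat.eq_sub_of_add_eq hsplit
  -- LHS as card
  have hLHS : (∑ xs : Fin K → Fin N → Bool,
      ((2 ^ N : ℝ)⁻¹) ^ K * (if Undet x₁ y ν xs then 1 else 0))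
      = ((2 ^ N : ℝ)⁻¹) ^ K *
        ((Finset.univ.filter fun xs : Fin K → Fin N → Bool => Undet x₁ y ν xs).card : ℝ) := by
    rw [← Finset.mul_sum, Finset.sum_boole]
  have hFG : (Finset.univ.filter fun xs : Fin K → Fin N → Bool => Undet x₁ y ν xs).card
      ≤ (Finset.univ.filter fun xs : Fin K → Fin N → Bool =>
          ∃ j, hammingDist (xs j) y ≤ t).card := by
    apply Finset.card_le_card
    intro xs hxs
    simp only [Finset.mem_filter, Finset.mem_univ, true_and] at hxs ⊢
    exact part1 xs hxs
  -- real arithmetic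
  have h2Npos : (0:ℝ) < (2:ℝ) ^ N := by positivity
  have hBle : B ^ K ≤ (2 ^ N) ^ K := Nat.pow_le_pow_left (Nat.sub_le _ _) K
  have hsumb : (∑ i ∈ Finset.range (t + 1), (N.choose i : ℝ)) = (b : ℝ) := by
    rw [hbball]; push_cast; ring
  have hRHS : 1 - (1 - (2 ^ N : ℝ)⁻¹ * ∑ i ∈ Finset.range (t + 1), (N.choose i : ℝ)) ^ K
      = ((2 ^ N : ℝ)⁻¹) ^ K *
        (((Finset.univ.filter fun xs : Fin K → Fin N → Bool =>
            ∃ j, hammingDist (xs j) y ≤ t).card : ℝ)) := by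
    rw [hG, hsumb]
    have h1 : (1 - (2 ^ N : ℝ)⁻¹ * (b:ℝ)) = (B : ℝ) * ((2 ^ N : ℝ)⁻¹) := by
      rw [hB, Nat.cast_sub hble]
      push_cast
      field_simp
    rw [h1, Nat.cast_sub hBle]
    push_cast
    rw [mul_pow]
    field_simp
    rw [one_div, inv_pow, mul_sub, inv_mul_cancel₀ (by positivity : ((2:ℝ)^N)^K ≠ 0)]
    ring
  rw [hLHS, hRHS]
  apply mul_le_mul_of_nonneg_left _ (by positivity)
  exact_mod_cast hFG
end
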